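/- arXiv:1203.1903 — 2 statements merged into one kernel-verified Lean document; each statement's English description precedes it below -/
import Mathlib

section
/- Let v₀, v ∈ ℂ be nonzero and let ε > 0 satisfy |v₀ − v| < ε < |v₀|. Then the angle θ between v₀ and v (viewed as vectors in the real inner product space ℂ) satisfies tan θ < ε / √(|v₀|² − ε²). In particular θ < π/2. -/
open scoped RealInnerProductSpace

open InnerProductGeometry in
/-- If `v₀, v ∈ ℂ` are nonzero and `|v₀ - v| < ε < |v₀|`, then the angle `θ` between
`v₀` and `v` (as vectors in the real inner product space `ℂ`) satisfies `θ < π/2` and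
`tan θ < ε / √(|v₀|² - ε²)`. -/
theorem angle_tan_lt_of_close (v₀ v : ℂ) (hv₀ : v₀ ≠ 0) (hv : v ≠ 0) (ε : ℝ)
    (h₁ : ‖v₀ - v‖ < ε) (h₂ : ε < ‖v₀‖) :
    angle v₀ v < Real.pi / 2 ∧
      Real.tan (angle v₀ v) < ε / Real.sqrt (‖v₀‖ ^ 2 - ε ^ 2) := by
  set θ := angle v₀ v with hθ
  have habs0 : (0:ℝ) < ‖v₀‖ := norm_pos_iff.mpr hv₀
  have habsv : (0:ℝ) < ‖v‖ := norm_pos_iff.mpr hv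
  have hε : (0:ℝ) < ε := lt_of_le_of_lt (by positivity) h₁
  have hn0 : ‖v₀‖ = ‖v₀‖ := rfl
  have hnv : ‖v‖ = ‖v‖ := rfl
  -- sin bound
  have key : Real.sin θ * (‖v₀‖ * ‖v‖) = |((starRingEnd ℂ) v₀ * v).im| := by
    rw [hθ, sin_angle_mul_norm_mul_norm,
      show ⟪v₀,v₀⟫ * ⟪v,v⟫ - ⟪v₀,v⟫ * ⟪v₀,v⟫ = ((starRingEnd ℂ) v₀ * v).im ^ 2 by
        simp only [Complex.inner, Complex.mul_re, Complex.mul_im, Complex.conj_re,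
          Complex.conj_im]
        ring]
    exact Real.sqrt_sq_eq_abs _
  have him : |((starRingEnd ℂ) v₀ * v).im| < ε * ‖v‖ := by
    have h1 : ((starRingEnd ℂ) v₀ * v).im = ((starRingEnd ℂ) (v₀ - v) * v).im := by
      simp only [map_sub, sub_mul, Complex.sub_im, Complex.mul_im, Complex.conj_re,
        Complex.conj_im]
      ring
    rw [h1]
    calc |((starRingEnd ℂ) (v₀ - v) * v).im| ≤ ‖(starRingEnd ℂ) (v₀ - v) * v‖ :=
          Complex.abs_im_le_norm _
      _ = ‖v₀ - v‖ * ‖v‖ := by rw [norm_mul, Complex.norm_conj]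
      _ < ε * ‖v‖ := by exact mul_lt_mul_of_pos_right h₁ habsv
  have hsin : Real.sin θ * ‖v₀‖ < ε := by
    have := key.trans_lt him
    rw [hn0, hnv] at this
    nlinarith
  have hsin0 : 0 ≤ Real.sin θ :=
    Real.sin_nonneg_of_nonneg_of_le_pi (angle_nonneg _ _) (angle_le_pi _ _)
  -- cos bound
  have hinner : 0 < ((starRingEnd ℂ) v₀ * v).re := by
    have h1 : ((starRingEnd ℂ) v₀ * v).re
        = ‖v₀‖ ^ 2 - ((starRingEnd ℂ) v₀ * (v₀ - v)).re := by
      rw [show (‖v₀‖:ℝ) ^ 2 = Complex.normSq v₀ from Complex.sq_norm v₀]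
      simp only [Complex.normSq_apply, Complex.mul_re, Complex.sub_re, Complex.sub_im,
        Complex.conj_re, Complex.conj_im]
      ring
    have h2 : ((starRingEnd ℂ) v₀ * (v₀ - v)).re ≤ ‖v₀‖ * ‖v₀ - v‖ := by
      calc ((starRingEnd ℂ) v₀ * (v₀ - v)).re ≤ ‖(starRingEnd ℂ) v₀ * (v₀ - v)‖ :=
            Complex.re_le_norm _
        _ = ‖v₀‖ * ‖v₀ - v‖ := by rw [norm_mul, Complex.norm_conj]
    nlinarith [norm_nonneg (v₀ - v)]
  have hcos : 0 < Real.cos θ := by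
    rw [hθ, cos_angle, Complex.inner]
    exact div_pos (by rw [mul_comm]; exact hinner) (by rw [hn0, hnv]; positivity)
  -- θ < π/2
  have hlt : θ < Real.pi / 2 := by
    by_contra h
    push_neg at h
    have := Real.cos_nonpos_of_pi_div_two_le_of_le h
      (le_trans (angle_le_pi v₀ v) (by linarith [Real.pi_pos]))
    linarith
  refine ⟨hlt, ?_⟩
  -- tan bound
  have hK : (0:ℝ) < Real.sqrt (‖v₀‖ ^ 2 - ε ^ 2) := by
    apply Real.sqrt_pos.2
    nlinarith
  have hs : Real.sin θ < ε / ‖v₀‖ := by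
    rw [lt_div_iff₀ habs0]; exact hsin
  have hcos_eq : Real.cos θ = Real.sqrt (1 - Real.sin θ ^ 2) := by
    rw [← Real.sin_sq_add_cos_sq θ]
    simp only [add_sub_cancel_left]
    exact (Real.sqrt_sq hcos.le).symm
  have hc : Real.sqrt (‖v₀‖ ^ 2 - ε ^ 2) / ‖v₀‖ < Real.cos θ := by
    rw [hcos_eq]
    rw [Real.lt_sqrt (by positivity)]
    rw [div_pow, Real.sq_sqrt (by nlinarith : (0:ℝ) ≤ ‖v₀‖ ^ 2 - ε ^ 2)]
    rw [div_lt_iff₀ (by positivity)]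
    have hs2 : Real.sin θ ^ 2 < (ε / ‖v₀‖) ^ 2 := by
      apply sq_lt_sq' _ hs
      linarith [div_pos hε habs0]
    rw [div_pow] at hs2
    rw [lt_div_iff₀ (by positivity)] at hs2
    nlinarith
  rw [Real.tan_eq_sin_div_cos]
  have step : Real.sin θ / Real.cos θ
      < (ε / ‖v₀‖) / (Real.sqrt (‖v₀‖ ^ 2 - ε ^ 2) / ‖v₀‖) :=
    div_lt_div₀ hs hc.le (by positivity) (by positivity)
  calc Real.sin θ / Real.cos θ
      < (ε / ‖v₀‖) / (Real.sqrt (‖v₀‖ ^ 2 - ε ^ 2) / ‖v₀‖) := step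
    _ = ε / Real.sqrt (‖v₀‖ ^ 2 - ε ^ 2) := by
        field_simp
end

section
/- Let v₀ ∈ ℂ be nonzero and let 0 < ε < |v₀|/√2. If v, w ∈ ℂ satisfy |v₀ − v| < ε and |v₀ − w| < ε (so in particular v, w ≠ 0), then the angle φ between v and w (viewed as vectors in the real inner product space ℂ) satisfies φ < π/2 and tan φ < 2ε√(|v₀|² − ε²) / (|v₀|² − 2ε²). -/
open InnerProductGeometry in
private lemma aux_close (v₀ : ℂ) (ε : ℝ) (hε : 0 < ε) (hεr : ε < ‖v₀‖) (z : ℂ)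
    (h : ‖v₀ - z‖ < ε) :
    0 < ((starRingEnd ℂ) v₀ * z).re ∧
      ((starRingEnd ℂ) v₀ * z).im ^ 2 * (‖v₀‖ ^ 2 - ε ^ 2) <
        ε ^ 2 * ((starRingEnd ℂ) v₀ * z).re ^ 2 := by
  have hr0 : 0 < ‖v₀‖ := lt_trans hε hεr
  set r : ℝ := ‖v₀‖ with hrdef
  set c : ℂ := (starRingEnd ℂ) v₀ * (v₀ - z) with hc
  have hr2 : r ^ 2 = v₀.re * v₀.re + v₀.im * v₀.im := by
    rw [hrdef, Complex.sq_norm, Complex.normSq_apply]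
  have hsplit : (starRingEnd ℂ) v₀ * z = (starRingEnd ℂ) v₀ * v₀ - c := by
    rw [hc]; ring
  have hre : ((starRingEnd ℂ) v₀ * z).re = r ^ 2 - c.re := by
    rw [hsplit, Complex.sub_re, Complex.mul_re, Complex.conj_re, Complex.conj_im, hr2]; ring
  have him : ((starRingEnd ℂ) v₀ * z).im = - c.im := by
    rw [hsplit, Complex.sub_im, Complex.mul_im, Complex.conj_re, Complex.conj_im]; ring
  have habsc : ‖c‖ < r * ε := by
    rw [hc, norm_mul, Complex.norm_conj]
    exact (mul_lt_mul_of_pos_left h hr0)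
  have hcsq : c.re ^ 2 + c.im ^ 2 < r ^ 2 * ε ^ 2 := by
    have h1 : c.re ^ 2 + c.im ^ 2 = ‖c‖ ^ 2 := by
      rw [Complex.sq_norm, Complex.normSq_apply]; ring
    have h2 : ‖c‖ ^ 2 < (r * ε) ^ 2 := by
      have := norm_nonneg c
      nlinarith
    nlinarith
  have hrepos : 0 < r ^ 2 - c.re := by
    have h1 : c.re < r * ε := lt_of_le_of_lt (Complex.re_le_norm c) habsc
    nlinarith [mul_pos hr0 (sub_pos.mpr hεr)]
  constructor
  · rw [hre]; exact hrepos
  · rw [hre, him]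
    have hK : 0 < r ^ 2 - ε ^ 2 := by nlinarith
    nlinarith [mul_pos hK (by nlinarith : (0:ℝ) < r ^ 2 * ε ^ 2 - c.re ^ 2 - c.im ^ 2),
      sq_nonneg (r * (c.re - ε ^ 2))]

set_option maxHeartbeats 1000000 in
private lemma aux_core (ε r s R₁ I₁ R₂ I₂ P Q : ℝ) (hε : 0 < ε)
    (h2 : 2 * ε ^ 2 < r ^ 2) (hs2 : s ^ 2 = r ^ 2 - ε ^ 2) (hs0 : 0 < s)
    (hA1 : 0 < R₁) (hB1 : 0 < R₂)
    (hA2 : I₁ ^ 2 * (r ^ 2 - ε ^ 2) < ε ^ 2 * R₁ ^ 2)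
    (hB2 : I₂ ^ 2 * (r ^ 2 - ε ^ 2) < ε ^ 2 * R₂ ^ 2)
    (hP : r ^ 2 * P = R₁ * R₂ + I₁ * I₂) (hQ : r ^ 2 * Q = R₁ * I₂ - I₁ * R₂)
    (hr0 : 0 < r) :
    0 < P ∧ (r ^ 2 - 2 * ε ^ 2) * |Q| < 2 * ε * s * P := by
  have hK : 0 < r ^ 2 - ε ^ 2 := by nlinarith
  have hL : 0 < r ^ 2 - 2 * ε ^ 2 := by linarith
  have hr2 : (0:ℝ) < r ^ 2 := by positivity
  have hI₁ : s * |I₁| < ε * R₁ := by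
    apply lt_of_pow_lt_pow_left₀ 2 (le_of_lt (mul_pos hε hA1))
    rw [mul_pow, mul_pow, sq_abs, hs2]; nlinarith
  have hI₂ : s * |I₂| < ε * R₂ := by
    apply lt_of_pow_lt_pow_left₀ 2 (le_of_lt (mul_pos hε hB1))
    rw [mul_pow, mul_pow, sq_abs, hs2]; nlinarith
  have habsI₁0 : 0 ≤ |I₁| := abs_nonneg I₁
  have habsI₂0 : 0 ≤ |I₂| := abs_nonneg I₂
  have hprod : s ^ 2 * (|I₁| * |I₂|) < ε ^ 2 * (R₁ * R₂) := by
    calc s ^ 2 * (|I₁| * |I₂|) = (s * |I₁|) * (s * |I₂|) := by ring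
      _ < (ε * R₁) * (ε * R₂) :=
          mul_lt_mul'' hI₁ hI₂ (mul_nonneg hs0.le habsI₁0) (mul_nonneg hs0.le habsI₂0)
      _ = ε ^ 2 * (R₁ * R₂) := by ring
  have hprod' : 0 < ε ^ 2 * (R₁ * R₂) - (r ^ 2 - ε ^ 2) * (|I₁| * |I₂|) := by
    rw [← hs2]; linarith
  have hII : (0:ℝ) ≤ I₁ * I₂ + |I₁| * |I₂| := by
    have := neg_abs_le (I₁ * I₂)
    rw [abs_mul] at this
    linarith
  have hIIs : (0:ℝ) ≤ s ^ 2 * (I₁ * I₂ + |I₁| * |I₂|) := mul_nonneg (sq_nonneg s) hII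
  have hRR : 0 < R₁ * R₂ := mul_pos hA1 hB1
  have hApre : 0 < R₁ * R₂ + I₁ * I₂ := by
    have h5 : 0 < s ^ 2 * (R₁ * R₂ + I₁ * I₂) := by nlinarith [hIIs, hprod', hRR, hL, hs2]
    nlinarith [h5, hs2, hK]
  have hPpos : 0 < P := by nlinarith [hApre, hP, hr2]
  refine ⟨hPpos, ?_⟩
  have htri : |R₁ * I₂ - I₁ * R₂| ≤ R₁ * |I₂| + |I₁| * R₂ := by
    calc |R₁ * I₂ - I₁ * R₂| ≤ |R₁ * I₂| + |I₁ * R₂| := abs_sub _ _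
      _ = R₁ * |I₂| + |I₁| * R₂ := by
          rw [abs_mul, abs_mul, abs_of_pos hA1, abs_of_pos hB1]
  have hmain : (r ^ 2 - 2 * ε ^ 2) * (R₁ * |I₂| + |I₁| * R₂) <
      2 * ε * s * (R₁ * R₂ + I₁ * I₂) := by
    have h1 : 0 ≤ (ε * R₁ - s * |I₁|) * ((r ^ 2 - 2 * ε ^ 2) * R₂) :=
      mul_nonneg (by linarith) (mul_nonneg hL.le hB1.le)
    have h2' : 0 ≤ (ε * R₂ - s * |I₂|) * ((r ^ 2 - 2 * ε ^ 2) * R₁) :=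
      mul_nonneg (by linarith) (mul_nonneg hL.le hA1.le)
    have hIIs' : (0:ℝ) ≤ (r ^ 2 - ε ^ 2) * (I₁ * I₂ + |I₁| * |I₂|) := by
      rw [← hs2]; exact hIIs
    have hgoal_s : s * ((r ^ 2 - 2 * ε ^ 2) * (R₁ * |I₂| + |I₁| * R₂)) <
        2 * ε * ((r ^ 2 - ε ^ 2) * (R₁ * R₂ + I₁ * I₂)) := by
      nlinarith [h1, h2', mul_pos hε hprod', mul_nonneg hε.le hIIs', hs2]
    have heq : 2 * ε * ((r ^ 2 - ε ^ 2) * (R₁ * R₂ + I₁ * I₂)) =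
        s * (2 * ε * s * (R₁ * R₂ + I₁ * I₂)) := by rw [← hs2]; ring
    rw [heq] at hgoal_s
    exact lt_of_mul_lt_mul_left hgoal_s hs0.le
  have hkey : (r ^ 2 - 2 * ε ^ 2) * |R₁ * I₂ - I₁ * R₂| < 2 * ε * s * (R₁ * R₂ + I₁ * I₂) :=
    lt_of_le_of_lt (mul_le_mul_of_nonneg_left htri hL.le) hmain
  have habsQ : r ^ 2 * |Q| = |R₁ * I₂ - I₁ * R₂| := by
    rw [← hQ, abs_mul, abs_of_pos hr2]
  rw [← hP, ← habsQ] at hkey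
  nlinarith [hkey, hr2]

open InnerProductGeometry in
/-- Let `v₀ ∈ ℂ` be nonzero and `0 < ε < |v₀|/√2`. If `v, w ∈ ℂ` satisfy
`|v₀ - v| < ε` and `|v₀ - w| < ε`, then the angle `φ` between `v` and `w`
(as vectors in the real inner product space `ℂ`) satisfies `φ < π/2` and
`tan φ < 2ε√(|v₀|² - ε²) / (|v₀|² - 2ε²)`. -/
theorem angle_tan_lt_of_both_close (v₀ : ℂ) (hv₀ : v₀ ≠ 0) (ε : ℝ) (hε : 0 < ε)
    (hεlt : ε < ‖v₀‖ / Real.sqrt 2) (v w : ℂ)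
    (hv : ‖v₀ - v‖ < ε) (hw : ‖v₀ - w‖ < ε) :
    angle v w < Real.pi / 2 ∧
      Real.tan (angle v w) <
        2 * ε * Real.sqrt (‖v₀‖ ^ 2 - ε ^ 2) /
          (‖v₀‖ ^ 2 - 2 * ε ^ 2) := by
  have hr0 : 0 < ‖v₀‖ := norm_pos_iff.mpr hv₀
  set r : ℝ := ‖v₀‖ with hrdef
  have hsqrt2 : (Real.sqrt 2) ^ 2 = 2 := Real.sq_sqrt (by norm_num)
  have hsqrt2pos : 0 < Real.sqrt 2 := Real.sqrt_pos.mpr (by norm_num)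
  have hεs : ε * Real.sqrt 2 < r := by
    rw [div_eq_mul_inv] at hεlt
    calc ε * Real.sqrt 2 < r * (Real.sqrt 2)⁻¹ * Real.sqrt 2 := by
          exact mul_lt_mul_of_pos_right hεlt hsqrt2pos
      _ = r := by field_simp
  have h2 : 2 * ε ^ 2 < r ^ 2 := by
    have := mul_lt_mul'' hεs hεs (by positivity) (by positivity)
    nlinarith
  have hεr : ε < r := by nlinarith
  have hK : 0 < r ^ 2 - ε ^ 2 := by nlinarith
  have hL : 0 < r ^ 2 - 2 * ε ^ 2 := by linarith
  set s : ℝ := Real.sqrt (r ^ 2 - ε ^ 2) with hsdef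
  have hs2 : s ^ 2 = r ^ 2 - ε ^ 2 := Real.sq_sqrt hK.le
  have hs0 : 0 < s := Real.sqrt_pos.mpr hK
  obtain ⟨hA1, hA2⟩ := aux_close v₀ ε hε hεr v hv
  obtain ⟨hB1, hB2⟩ := aux_close v₀ ε hε hεr w hw
  rw [← hrdef] at hA2 hB2
  set R₁ : ℝ := ((starRingEnd ℂ) v₀ * v).re with hdR₁
  set I₁ : ℝ := ((starRingEnd ℂ) v₀ * v).im with hdI₁
  set R₂ : ℝ := ((starRingEnd ℂ) v₀ * w).re with hdR₂
  set I₂ : ℝ := ((starRingEnd ℂ) v₀ * w).im with hdI₂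
  set p : ℂ := (starRingEnd ℂ) v * w with hp
  have hr2 : r ^ 2 = v₀.re * v₀.re + v₀.im * v₀.im := by
    rw [hrdef, Complex.sq_norm, Complex.normSq_apply]
  have hpre : r ^ 2 * p.re = R₁ * R₂ + I₁ * I₂ := by
    rw [hdR₁, hdI₁, hdR₂, hdI₂]
    simp only [hp, Complex.mul_re, Complex.mul_im, Complex.conj_re, Complex.conj_im, hr2]
    ring
  have hpim : r ^ 2 * p.im = R₁ * I₂ - I₁ * R₂ := by
    rw [hdR₁, hdI₁, hdR₂, hdI₂]
    simp only [hp, Complex.mul_re, Complex.mul_im, Complex.conj_re, Complex.conj_im, hr2]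
    ring
  obtain ⟨hppos, hBfinal⟩ := aux_core ε r s R₁ I₁ R₂ I₂ p.re p.im hε h2 hs2 hs0
    hA1 hB1 hA2 hB2 hpre hpim hr0
  -- now the angle statements
  have hvne : v ≠ 0 := by
    intro hv0
    rw [hv0, sub_zero] at hv
    exact absurd hv (not_lt.mpr hεr.le)
  have hwne : w ≠ 0 := by
    intro hw0
    rw [hw0, sub_zero] at hw
    exact absurd hw (not_lt.mpr hεr.le)
  have hNv : 0 < ‖v‖ := norm_pos_iff.mpr hvne
  have hNw : 0 < ‖w‖ := norm_pos_iff.mpr hwne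
  have hN : 0 < ‖v‖ * ‖w‖ := mul_pos hNv hNw
  have hinner : inner ℝ v w = p.re := by rw [Complex.inner v w, hp, mul_comm]
  have hcosN : Real.cos (angle v w) * (‖v‖ * ‖w‖) = p.re := by
    rw [cos_angle_mul_norm_mul_norm, hinner]
  have hsinN : Real.sin (angle v w) * (‖v‖ * ‖w‖) = |p.im| := by
    rw [sin_angle_mul_norm_mul_norm, hinner]
    have h1 : (inner ℝ v v : ℝ) * (inner ℝ w w : ℝ) = p.re ^ 2 + p.im ^ 2 := by
      rw [real_inner_self_eq_norm_sq, real_inner_self_eq_norm_sq]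
      have h2 : ‖v‖ ^ 2 * ‖w‖ ^ 2 = ‖p‖ ^ 2 := by
        rw [hp, norm_mul, Complex.norm_conj]
        ring
      rw [h2, Complex.sq_norm, Complex.normSq_apply]; ring
    rw [h1]
    have h3 : p.re ^ 2 + p.im ^ 2 - p.re * p.re = p.im ^ 2 := by ring
    rw [h3, Real.sqrt_sq_eq_abs]
  have hcospos : 0 < Real.cos (angle v w) := by
    by_contra hcc
    push_neg at hcc
    nlinarith
  have hang : angle v w < Real.pi / 2 := by
    by_contra hcc
    push_neg at hcc
    have h1 : angle v w ≤ Real.pi + Real.pi / 2 := by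
      linarith [angle_le_pi v w, Real.pi_pos]
    have := Real.cos_nonpos_of_pi_div_two_le_of_le hcc h1
    linarith
  refine ⟨hang, ?_⟩
  rw [Real.tan_eq_sin_div_cos]
  have hcos' : Real.cos (angle v w) = p.re / (‖v‖ * ‖w‖) :=
    (eq_div_iff hN.ne').mpr hcosN
  have hsin' : Real.sin (angle v w) = |p.im| / (‖v‖ * ‖w‖) :=
    (eq_div_iff hN.ne').mpr hsinN
  have htaneq : |p.im| / (‖v‖ * ‖w‖) / (p.re / (‖v‖ * ‖w‖)) = |p.im| / p.re := by
    rw [div_div_div_comm, div_self hN.ne', div_one]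
  rw [hcos', hsin', htaneq]
  rw [div_lt_div_iff₀ hppos hL]
  calc |p.im| * (r ^ 2 - 2 * ε ^ 2) = (r ^ 2 - 2 * ε ^ 2) * |p.im| := by ring
    _ < 2 * ε * s * p.re := hBfinal
    _ = 2 * ε * Real.sqrt (r ^ 2 - ε ^ 2) * p.re := by rw [hsdef]
end
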